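/- For p ∈ (0,1) and z > 0 with -z·log(1-p) > 1, the map f(q) = 1 - (1-p)^{z q} has exactly one fixed point q* in the open interval (0,1), besides the fixed point at 0. -/

import Mathlib

open Real Set

/-- Two distinct positive fixed points contradict strict convexity of `exp`. -/
lemma aux_unique (L z : ℝ) (hz : 0 < z) {a b : ℝ} (ha0 : 0 < a) (hab : a < b)
    (hbL : z * b * L ≠ 0)
    (ha : 1 - Real.exp (z * a * L) = a) (hb : 1 - Real.exp (z * b * L) = b) : False := by
  have hb0 : 0 < b := ha0.trans hab
  set t : ℝ := a / b with htdef
  have ht0 : 0 < t := div_pos ha0 hb0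
  have ht1 : t < 1 := (div_lt_one hb0).2 hab
  have hconv := strictConvexOn_exp.2 (Set.mem_univ (0:ℝ)) (Set.mem_univ (z * b * L))
    (Ne.symm hbL) (by linarith : (0:ℝ) < 1 - t) ht0 (by ring)
  simp only [smul_eq_mul, mul_zero, zero_add, Real.exp_zero, mul_one] at hconv
  have htb : t * (z * b * L) = z * a * L := by
    rw [htdef, show a / b * (z * b * L) = z * (a / b * b) * L by ring, div_mul_cancel₀ a hb0.ne']
  rw [htb] at hconv
  have hea : Real.exp (z * a * L) = 1 - a := by linarith
  have heb : Real.exp (z * b * L) = 1 - b := by linarith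
  rw [hea, heb] at hconv
  have htb' : t * b = a := by rw [htdef]; exact div_mul_cancel₀ a hb0.ne'
  nlinarith [hconv]

/-- If `-z log(1-p) > 1`, `f` has exactly one fixed point in `(0,1)`. -/
theorem stmt_4 (p z : ℝ) (hp : p ∈ Set.Ioo (0:ℝ) 1) (hz : 0 < z)
    (hcrit : 1 < -z * Real.log (1 - p)) :
    ∃! q : ℝ, q ∈ Set.Ioo (0:ℝ) 1 ∧
      1 - Real.exp (z * q * Real.log (1 - p)) = q := by
  obtain ⟨hp0, hp1⟩ := hp
  set L : ℝ := Real.log (1 - p) with hLdef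
  have hL : L < 0 := Real.log_neg (by linarith) (by linarith)
  set c : ℝ := -z * L with hcdef
  have hc : 1 < c := hcrit
  have hc0 : 0 < c := by linarith
  set q0 : ℝ := min ((c - 1) / (2 * c)) (1 / 2) with hq0def
  have hq0pos : 0 < q0 := lt_min (div_pos (by linarith) (by linarith)) (by norm_num)
  have hq0half : q0 ≤ 1 / 2 := min_le_right _ _
  have hcq0 : c * q0 ≤ (c - 1) / 2 := by
    have h1 : q0 ≤ (c - 1) / (2 * c) := min_le_left _ _
    calc c * q0 ≤ c * ((c - 1) / (2 * c)) := by nlinarith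
      _ = (c - 1) / 2 := by field_simp
  -- continuous function g
  set g : ℝ → ℝ := fun q => 1 - Real.exp (z * q * L) - q with hgdef
  have hgc : Continuous g := by fun_prop
  -- g q0 > 0
  have hE : Real.exp (z * q0 * L) * (c * q0 + 1) < 1 := by
    have hne : c * q0 ≠ 0 := by positivity
    have h1 := Real.add_one_lt_exp hne
    have h2 : Real.exp (z * q0 * L) * Real.exp (c * q0) = 1 := by
      rw [← Real.exp_add]
      have : z * q0 * L + c * q0 = 0 := by rw [hcdef]; ring
      rw [this, Real.exp_zero]
    nlinarith [Real.exp_pos (z * q0 * L)]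
  have hgq0 : 0 < g q0 := by
    have hEpos := Real.exp_pos (z * q0 * L)
    have h3 : 1 ≤ (1 - q0) * (c * q0 + 1) := by
      nlinarith [mul_pos hq0pos (show 0 < c - 1 - c * q0 by linarith)]
    have h4 : Real.exp (z * q0 * L) < 1 - q0 := by
      have h5 : Real.exp (z * q0 * L) * (c * q0 + 1) < (1 - q0) * (c * q0 + 1) := by linarith
      exact lt_of_mul_lt_mul_right h5 (by positivity)
    simp only [hgdef]
    linarith
  have hg1 : g 1 < 0 := by
    simp only [hgdef]
    have := Real.exp_pos (z * 1 * L)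
    linarith
  have hq0lt1 : q0 < 1 := by linarith
  have hiv := intermediate_value_Ioo' (le_of_lt hq0lt1) hgc.continuousOn
  have h0mem : (0:ℝ) ∈ Set.Ioo (g 1) (g q0) := ⟨hg1, hgq0⟩
  obtain ⟨q, hqmem, hgq⟩ := hiv h0mem
  have hq01 : q ∈ Set.Ioo (0:ℝ) 1 := ⟨hq0pos.trans hqmem.1, hqmem.2⟩
  have hfix : 1 - Real.exp (z * q * L) = q := by
    simp only [hgdef] at hgq; linarith
  refine ⟨q, ⟨hq01, hfix⟩, ?_⟩
  rintro y ⟨⟨hy0, hy1⟩, hyfix⟩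
  by_contra hne
  have hyL : ∀ x : ℝ, 0 < x → z * x * L ≠ 0 := fun x hx => by
    have : z * x * L < 0 := by
      apply mul_neg_of_pos_of_neg (by positivity) hL
    linarith
  rcases lt_or_gt_of_ne hne with h | h
  · exact aux_unique L z hz hy0 h (hyL q hq01.1) hyfix hfix
  · exact aux_unique L z hz hq01.1 h (hyL y hy0) hfix hyfix
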